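/- Let B be an HTL normal form B = diag(q_1(z⁻¹)I_{n_1}+R_1 z⁻¹, …, q_m(z⁻¹)I_{n_m}+R_m z⁻¹) of size n and pole order k. Let G^o_k := {I_n + Σ_{s=1}^{k−1} g_s z^s : g_s ∈ M(n,ℂ)} ⊆ GL(n, ℂ[z]/(z^k)), let (O^tru_B)^o := {g ι(B) g⁻¹ : g ∈ G^o_k}, let H := {diag(h_1,…,h_m) : h_j ∈ GL(n_j,ℂ)} ⊆ GL(n,ℂ), and let Ad_H((O^tru_B)^o) := {hAh⁻¹ : A ∈ (O^tru_B)^o, h ∈ H}. Then the map (g, A) ↦ gAg⁻¹ induces a well-defined bijection from GL(n,ℂ) ×_H Ad_H((O^tru_B)^o) — the quotient of GL(n,ℂ) × Ad_H((O^tru_B)^o) by the relation (g,A) ∼ (gh⁻¹, hAh⁻¹) for h ∈ H — onto the truncated orbit O^tru_B. -/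

import Mathlib

/-!
STATEMENT 6: the decomposition `GL(n,ℂ) ×_H Ad_H((O^tru_B)^o) ≅ O^tru_B` of a
truncated orbit.  Elements of `M(n, ℂ((z))/ℂ[[z]])` are encoded by their canonical
representatives (principal parts).
-/

open Matrix BigOperators

noncomputable section

/-- Evaluation of a polynomial at `z⁻¹`. -/
def polyZinv (q : Polynomial ℂ) : LaurentSeries ℂ :=
  q.sum fun k c => HahnSeries.single (-(k : ℤ)) c

/-- The principal part of a Laurent series (the canonical representative of its class
in `ℂ((z))/ℂ[[z]]`). -/
def prin (f : LaurentSeries ℂ) : LaurentSeries ℂ :=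
  { coeff := fun k => if k < 0 then f.coeff k else 0
    isPWO_support' := f.isPWO_support'.mono (by
      intro k hk
      simp only [Function.mem_support, ne_eq] at hk ⊢
      intro h
      apply hk
      split <;> simp [h]) }

/-- The principal part of a matrix of Laurent series: the canonical representative of
its image under `ι : M(n,ℂ((z))) → M(n,ℂ((z))/ℂ[[z]])`. -/
def prinM {n : ℕ} (M : Matrix (Fin n) (Fin n) (LaurentSeries ℂ)) :
    Matrix (Fin n) (Fin n) (LaurentSeries ℂ) := M.map prin

/-- `GL(n, ℂ[[z]])`. -/
abbrev GLps (n : ℕ) := (Matrix (Fin n) (Fin n) (PowerSeries ℂ))ˣ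

/-- `GL(n, ℂ)`. -/
abbrev GLc (n : ℕ) := (Matrix (Fin n) (Fin n) ℂ)ˣ

/-- The inclusion `GL(n, ℂ[[z]]) → GL(n, ℂ((z)))`. -/
def glMap {n : ℕ} : GLps n →* (Matrix (Fin n) (Fin n) (LaurentSeries ℂ))ˣ :=
  Units.map ((HahnSeries.ofPowerSeries ℤ ℂ).mapMatrix).toMonoidHom

/-- The inclusion `GL(n, ℂ) → GL(n, ℂ((z)))`. -/
def glC {n : ℕ} : GLc n →* (Matrix (Fin n) (Fin n) (LaurentSeries ℂ))ˣ :=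
  Units.map ((HahnSeries.C : ℂ →+* LaurentSeries ℂ).mapMatrix).toMonoidHom

/-- Conjugation of a matrix of Laurent series by `X ∈ GL(n, ℂ[[z]])`. -/
def conjPS {n : ℕ} (X : GLps n) (B : Matrix (Fin n) (Fin n) (LaurentSeries ℂ)) :
    Matrix (Fin n) (Fin n) (LaurentSeries ℂ) :=
  (glMap X).val * B * ((glMap X)⁻¹).val

/-- Conjugation by a constant invertible matrix. -/
def conjC {n : ℕ} (g : GLc n) (B : Matrix (Fin n) (Fin n) (LaurentSeries ℂ)) :
    Matrix (Fin n) (Fin n) (LaurentSeries ℂ) :=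
  (glC g).val * B * ((glC g)⁻¹).val

/-- The data of an HTL normal form of size `n`. -/
structure HTLData (n : ℕ) where
  m : ℕ
  nb : Fin m → ℕ
  hn : ∑ j, nb j = n
  q : Fin m → Polynomial ℂ
  hq0 : ∀ j, (q j).coeff 0 = 0
  hq1 : ∀ j, (q j).coeff 1 = 0
  hqd : ∀ j j', j ≠ j' → q j ≠ q j'
  R : (j : Fin m) → Matrix (Fin (nb j)) (Fin (nb j)) ℂ

namespace HTLData

variable {n : ℕ} (D : HTLData n)

/-- Identification of the disjoint union of the blocks with `Fin n`. -/
def sigmaEquiv : (Σ j : Fin D.m, Fin (D.nb j)) ≃ Fin n :=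
  Fintype.equivFinOfCardEq (by simpa using D.hn)

/-- The matrix of the HTL normal form. -/
def mat : Matrix (Fin n) (Fin n) (LaurentSeries ℂ) :=
  Matrix.reindex D.sigmaEquiv D.sigmaEquiv
    (Matrix.blockDiagonal' fun j =>
      (fun a b => (if a = b then polyZinv (D.q j) else 0) +
        HahnSeries.single (-1 : ℤ) (D.R j a b)))

/-- The block of an index. -/
def blk (a : Fin n) : Fin D.m := (D.sigmaEquiv.symm a).1

/-- The truncated orbit `O^tru_B` (canonical representatives). -/
def Otru : Set (Matrix (Fin n) (Fin n) (LaurentSeries ℂ)) :=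
  {M | ∃ X : GLps n, M = prinM (conjPS X D.mat)}

/-- `(O^tru_B)^o`: the part of the truncated orbit obtained from the subgroup
`G^o_k ⊆ GL(n, ℂ[z]/(z^k))`, i.e. from those `X ∈ GL(n,ℂ[[z]])` with constant
coefficient `1` (acting through lifts). -/
def OtruO : Set (Matrix (Fin n) (Fin n) (LaurentSeries ℂ)) :=
  {M | ∃ X : GLps n, X.val.map (PowerSeries.constantCoeff : PowerSeries ℂ →+* ℂ) = 1 ∧
    M = prinM (conjPS X D.mat)}

/-- The group `H = {diag(h_1, …, h_m)} ⊆ GL(n,ℂ)` of block-diagonal constant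
matrices. -/
def Hgrp : Set (GLc n) := {h | ∀ a b, D.blk a ≠ D.blk b → h.val a b = 0}

/-- `Ad_H((O^tru_B)^o)`. -/
def AdH : Set (Matrix (Fin n) (Fin n) (LaurentSeries ℂ)) :=
  {M | ∃ h ∈ D.Hgrp, ∃ M0 ∈ D.OtruO, M = conjC h M0}

end HTLData

end

/-! ### Auxiliary lemmas -/

noncomputable section Aux

open HahnSeries Polynomial

namespace OrbitAux

/-- coefficient extraction as an additive monoid hom -/
def coeffHom (t : ℤ) : LaurentSeries ℂ →+ ℂ where
  toFun x := x.coeff t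
  map_zero' := rfl
  map_add' _ _ := HahnSeries.coeff_add

lemma coeff_sum {ι : Type*} (s : Finset ι) (f : ι → LaurentSeries ℂ) (t : ℤ) :
    (∑ i ∈ s, f i).coeff t = ∑ i ∈ s, (f i).coeff t :=
  map_sum (coeffHom t) f s

/-- A Laurent series is holomorphic if it has no negative coefficients. -/
def Hol (f : LaurentSeries ℂ) : Prop := ∀ t : ℤ, t < 0 → f.coeff t = 0

lemma Hol.mul {f g : LaurentSeries ℂ} (hf : Hol f) (hg : Hol g) : Hol (f * g) := by
  intro t ht
  rw [HahnSeries.coeff_mul]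
  apply Finset.sum_eq_zero
  rintro ⟨i, j⟩ hij
  rw [Finset.mem_addAntidiagonal] at hij
  rcases lt_or_ge i 0 with h | h
  · simp [hf i h]
  · have : j < 0 := by omega
    simp [hg j this]

/-- A matrix is holomorphic if all entries are. -/
def HolM {n : ℕ} (M : Matrix (Fin n) (Fin n) (LaurentSeries ℂ)) : Prop :=
  ∀ a b, Hol (M a b)

lemma HolM.mul {n : ℕ} {M N : Matrix (Fin n) (Fin n) (LaurentSeries ℂ)}
    (hM : HolM M) (hN : HolM N) : HolM (M * N) := by
  intro a b t ht
  rw [Matrix.mul_apply, coeff_sum]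
  exact Finset.sum_eq_zero fun c _ => (hM a c).mul (hN c b) t ht

lemma HolM.sub {n : ℕ} {M N : Matrix (Fin n) (Fin n) (LaurentSeries ℂ)}
    (hM : HolM M) (hN : HolM N) : HolM (M - N) := by
  intro a b t ht
  rw [Matrix.sub_apply, HahnSeries.coeff_sub, hM a b t ht, hN a b t ht, sub_zero]

lemma coeff_ofPowerSeries_neg (f : PowerSeries ℂ) (t : ℤ) (ht : t < 0) :
    (HahnSeries.ofPowerSeries ℤ ℂ f).coeff t = 0 := by
  have := PowerSeries.coeff_coe (R := ℂ) f t
  rw [if_pos ht] at this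
  exact this

lemma coeff_ofPowerSeries_zero (f : PowerSeries ℂ) :
    (HahnSeries.ofPowerSeries ℤ ℂ f).coeff 0 = PowerSeries.constantCoeff (R := ℂ) f := by
  have := HahnSeries.ofPowerSeries_apply_coeff (Γ := ℤ) (R := ℂ) f 0
  simpa using this

lemma glMap_val_apply {n : ℕ} (X : GLps n) (a b : Fin n) :
    (glMap X).val a b = HahnSeries.ofPowerSeries ℤ ℂ (X.val a b) := rfl

lemma holM_glMap {n : ℕ} (X : GLps n) : HolM ((glMap X).val) := by
  intro a b t ht
  rw [glMap_val_apply]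
  exact coeff_ofPowerSeries_neg _ t ht

lemma glMap_inv_val {n : ℕ} (X : GLps n) : ((glMap X)⁻¹).val = (glMap X⁻¹).val := by
  rw [← map_inv glMap]

lemma holM_glMap_inv {n : ℕ} (X : GLps n) : HolM (((glMap X)⁻¹).val) := by
  rw [glMap_inv_val]; exact holM_glMap _

lemma glC_val_apply {n : ℕ} (g : GLc n) (a b : Fin n) :
    (glC g).val a b = HahnSeries.C (g.val a b) := rfl

lemma holM_glC {n : ℕ} (g : GLc n) : HolM ((glC g).val) := by
  intro a b t ht
  rw [glC_val_apply, HahnSeries.C_apply, HahnSeries.coeff_single]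
  rw [if_neg (by omega)]

lemma glC_inv_val {n : ℕ} (g : GLc n) : ((glC g)⁻¹).val = (glC g⁻¹).val := by
  rw [← map_inv glC]

lemma holM_glC_inv {n : ℕ} (g : GLc n) : HolM (((glC g)⁻¹).val) := by
  rw [glC_inv_val]; exact holM_glC _

lemma prin_coeff (f : LaurentSeries ℂ) (t : ℤ) :
    (prin f).coeff t = if t < 0 then f.coeff t else 0 := rfl

lemma prinM_apply {n : ℕ} (M : Matrix (Fin n) (Fin n) (LaurentSeries ℂ)) (a b : Fin n) :
    prinM M a b = prin (M a b) := rfl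

lemma holM_sub_prinM {n : ℕ} (M : Matrix (Fin n) (Fin n) (LaurentSeries ℂ)) :
    HolM (M - prinM M) := by
  intro a b t ht
  rw [Matrix.sub_apply, HahnSeries.coeff_sub, prinM_apply, prin_coeff, if_pos ht, sub_self]

lemma C_mul_coeff (p : ℂ) (f : LaurentSeries ℂ) (t : ℤ) :
    (HahnSeries.C p * f).coeff t = p * f.coeff t := by
  rw [HahnSeries.C_apply, HahnSeries.coeff_single_zero_mul]

lemma mul_C_coeff (p : ℂ) (f : LaurentSeries ℂ) (t : ℤ) :
    (f * HahnSeries.C p).coeff t = f.coeff t * p := by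
  rw [HahnSeries.C_apply, HahnSeries.coeff_mul_single_zero]

lemma constConj_coeff {n : ℕ} (P Q : Matrix (Fin n) (Fin n) ℂ)
    (N : Matrix (Fin n) (Fin n) (LaurentSeries ℂ)) (a b : Fin n) (t : ℤ) :
    ((P.map (HahnSeries.C : ℂ →+* LaurentSeries ℂ) * N * Q.map (HahnSeries.C : ℂ →+* LaurentSeries ℂ)) a b).coeff t
      = ∑ d, ∑ c, P a c * (N c d).coeff t * Q d b := by
  rw [Matrix.mul_apply, coeff_sum]
  refine Finset.sum_congr rfl fun d _ => ?_
  rw [Matrix.map_apply, mul_C_coeff, Matrix.mul_apply, coeff_sum, Finset.sum_mul]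
  refine Finset.sum_congr rfl fun c _ => ?_
  rw [Matrix.map_apply, C_mul_coeff]

lemma conjC_val {n : ℕ} (g : GLc n) (M : Matrix (Fin n) (Fin n) (LaurentSeries ℂ)) :
    conjC g M = (g.val.map (HahnSeries.C : ℂ →+* LaurentSeries ℂ)) * M * ((g⁻¹).val.map (HahnSeries.C : ℂ →+* LaurentSeries ℂ)) := by
  unfold conjC
  rw [glC_inv_val]
  rfl

lemma conjC_prinM {n : ℕ} (g : GLc n) (N : Matrix (Fin n) (Fin n) (LaurentSeries ℂ)) :
    conjC g (prinM N) = prinM (conjC g N) := by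
  rw [conjC_val, conjC_val]
  ext a b t
  rw [prinM_apply, prin_coeff, constConj_coeff, constConj_coeff]
  by_cases ht : t < 0
  · rw [if_pos ht]
    refine Finset.sum_congr rfl fun d _ => Finset.sum_congr rfl fun c _ => ?_
    rw [prinM_apply, prin_coeff, if_pos ht]
  · rw [if_neg ht]
    refine (Finset.sum_eq_zero fun d _ => Finset.sum_eq_zero fun c _ => ?_)
    rw [prinM_apply, prin_coeff, if_neg ht, mul_zero, zero_mul]

lemma conjC_mul {n : ℕ} (g h : GLc n) (M : Matrix (Fin n) (Fin n) (LaurentSeries ℂ)) :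
    conjC g (conjC h M) = conjC (g * h) M := by
  simp only [conjC, _root_.map_mul, _root_.mul_inv_rev, Units.val_mul, Matrix.mul_assoc]

lemma conjC_one {n : ℕ} (M : Matrix (Fin n) (Fin n) (LaurentSeries ℂ)) :
    conjC 1 M = M := by
  simp only [conjC, _root_.map_one, inv_one, Units.val_one, Matrix.one_mul, Matrix.mul_one]

lemma conjPS_mul {n : ℕ} (X Y : GLps n) (B : Matrix (Fin n) (Fin n) (LaurentSeries ℂ)) :
    conjPS (X * Y) B = conjPS X (conjPS Y B) := by
  simp only [conjPS, _root_.map_mul, _root_.mul_inv_rev, Units.val_mul, Matrix.mul_assoc]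

/-- The inclusion `GL(n,ℂ) → GL(n,ℂ[[z]])` by constant power series. -/
def psC {n : ℕ} : GLc n →* GLps n :=
  Units.map ((PowerSeries.C (R := ℂ)).mapMatrix).toMonoidHom

lemma psC_val {n : ℕ} (g : GLc n) : (psC g).val = g.val.map (PowerSeries.C (R := ℂ)) := rfl

lemma glMap_psC {n : ℕ} (g : GLc n) : glMap (psC g) = glC g := by
  apply Units.ext
  apply Matrix.ext
  intro a b
  show HahnSeries.ofPowerSeries ℤ ℂ (PowerSeries.C (R := ℂ) (g.val a b)) = HahnSeries.C (g.val a b)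
  exact HahnSeries.ofPowerSeries_C _

lemma conjPS_psC {n : ℕ} (g : GLc n) (B : Matrix (Fin n) (Fin n) (LaurentSeries ℂ)) :
    conjPS (psC g) B = conjC g B := by
  unfold conjPS conjC
  rw [glMap_psC]


/-! ### Structure of the normal form matrix -/

lemma bd_coeff {m : ℕ} (nb : Fin m → ℕ) (q : Fin m → Polynomial ℂ)
    (R : ∀ j, Matrix (Fin (nb j)) (Fin (nb j)) ℂ) (i k : Σ j, Fin (nb j)) (t : ℤ)
    (ht : t ≠ -1) :
    ((Matrix.blockDiagonal' fun j =>
        ((fun a b => (if a = b then polyZinv (q j) else 0) +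
          HahnSeries.single (-1 : ℤ) (R j a b)) : Matrix (Fin (nb j)) (Fin (nb j)) (LaurentSeries ℂ))) i k).coeff t
      = if i = k then (polyZinv (q i.1)).coeff t else 0 := by
  obtain ⟨j, x⟩ := i
  obtain ⟨j', y⟩ := k
  erw [Matrix.blockDiagonal'_apply']
  by_cases h : j = j'
  · subst h
    rw [dif_pos rfl]
    have hy : (cast (congr_arg (fun j => Fin (nb j)) (rfl : j = j).symm) y) = y := rfl
    rw [hy]
    by_cases h2 : x = y
    · subst h2
      simp [HahnSeries.coeff_add, HahnSeries.coeff_single, ht]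
    · have : ¬((⟨j, x⟩ : Σ j, Fin (nb j)) = ⟨j, y⟩) := by simp [h2]
      simp [h2, this, HahnSeries.coeff_add, HahnSeries.coeff_single, ht]
  · rw [dif_neg h]
    have : ¬((⟨j, x⟩ : Σ j, Fin (nb j)) = ⟨j', y⟩) := by simp [h]
    simp [this]

lemma mat_coeff_ne {n : ℕ} (D : HTLData n) (a b : Fin n) (t : ℤ) (ht : t ≠ -1) :
    (D.mat a b).coeff t = if a = b then (polyZinv (D.q (D.blk a))).coeff t else 0 := by
  have h := bd_coeff D.nb D.q D.R (D.sigmaEquiv.symm a) (D.sigmaEquiv.symm b) t ht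
  unfold HTLData.mat
  rw [Matrix.reindex_apply, Matrix.submatrix_apply, h]
  by_cases hab : a = b
  · subst hab
    simp [HTLData.blk]
  · rw [if_neg hab, if_neg]
    intro hc
    exact hab (D.sigmaEquiv.symm.injective hc)

lemma mat_decomp {n : ℕ} (D : HTLData n) : ∃ r : Fin n → Fin n → ℂ,
    D.mat = Matrix.of (fun a b => (if a = b then polyZinv (D.q (D.blk a)) else 0) +
      HahnSeries.single (-1 : ℤ) (r a b)) := by
  refine ⟨fun a b => (D.mat a b).coeff (-1) -
    (if a = b then (polyZinv (D.q (D.blk a))).coeff (-1) else 0), ?_⟩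
  ext a b t
  rw [Matrix.of_apply, HahnSeries.coeff_add, HahnSeries.coeff_single]
  by_cases ht : t = -1
  · subst ht
    rw [if_pos rfl, apply_ite (fun f : LaurentSeries ℂ => f.coeff (-1))]
    simp only [HahnSeries.coeff_zero]
    ring
  · rw [if_neg ht, add_zero, mat_coeff_ne D a b t ht,
      apply_ite (fun f : LaurentSeries ℂ => f.coeff t)]
    simp only [HahnSeries.coeff_zero]

lemma mul_polyZinv_coeff (x : LaurentSeries ℂ) (q : Polynomial ℂ) (t : ℤ) :
    (x * polyZinv q).coeff t = ∑ d ∈ q.support, x.coeff (t + d) * q.coeff d := by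
  unfold polyZinv
  rw [Polynomial.sum_def, Finset.mul_sum, coeff_sum]
  refine Finset.sum_congr rfl fun d _ => ?_
  have h : t = (t + d) + (-(d : ℤ)) := by ring
  conv_lhs => rw [h]
  exact HahnSeries.coeff_mul_single_add

/-! ### The key computation -/

lemma keyMain {n : ℕ} (D : HTLData n) (W : Matrix (Fin n) (Fin n) (LaurentSeries ℂ))
    (hW : HolM W) (hC : HolM (W * D.mat - D.mat * W))
    (a b : Fin n) (hab : D.blk a ≠ D.blk b) : (W a b).coeff 0 = 0 := by
  obtain ⟨r, hmat⟩ := mat_decomp D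
  set p : Polynomial ℂ := D.q (D.blk b) - D.q (D.blk a) with hp
  have hp0 : p ≠ 0 := sub_ne_zero.mpr (D.hqd _ _ (Ne.symm hab))
  have hl : p.coeff p.natDegree ≠ 0 := fun hz => hp0 (Polynomial.leadingCoeff_eq_zero.mp hz)
  have h0 : p.coeff 0 = 0 := by rw [hp, Polynomial.coeff_sub, D.hq0, D.hq0, sub_zero]
  have h1 : p.coeff 1 = 0 := by rw [hp, Polynomial.coeff_sub, D.hq1, D.hq1, sub_zero]
  have hDg2 : 2 ≤ p.natDegree := by
    by_contra hlt
    push_neg at hlt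
    have : p.natDegree = 0 ∨ p.natDegree = 1 := by omega
    rcases this with h | h <;> rw [h] at hl
    · exact hl h0
    · exact hl h1
  set Dg : ℕ := p.natDegree with hDg
  have ht0 : -(Dg : ℤ) < 0 := by omega
  have ht01 : -(Dg : ℤ) + 1 < 0 := by omega
  have hWmul : ((W * D.mat) a b).coeff (-(Dg : ℤ))
      = (W a b * polyZinv (D.q (D.blk b))).coeff (-(Dg : ℤ)) := by
    rw [Matrix.mul_apply, coeff_sum]
    rw [Finset.sum_eq_single b]
    · rw [hmat, Matrix.of_apply, if_pos rfl, mul_add, HahnSeries.coeff_add]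
      have hz : (W a b * HahnSeries.single (-1 : ℤ) (r b b)).coeff (-(Dg : ℤ)) = 0 := by
        have h := HahnSeries.coeff_mul_single_add (x := W a b) (r := r b b)
          (a := -(Dg : ℤ) + 1) (b := (-1 : ℤ))
        rw [show -(Dg : ℤ) + 1 + -1 = -(Dg : ℤ) by ring] at h
        rw [h, hW a b _ ht01, zero_mul]
      rw [hz, add_zero]
    · intro c _ hcb
      rw [hmat, Matrix.of_apply, if_neg hcb, zero_add]
      have h := HahnSeries.coeff_mul_single_add (x := W a c) (r := r c b)
        (a := -(Dg : ℤ) + 1) (b := (-1 : ℤ))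
      rw [show -(Dg : ℤ) + 1 + -1 = -(Dg : ℤ) by ring] at h
      rw [h, hW a c _ ht01, zero_mul]
    · intro hb; exact absurd (Finset.mem_univ b) hb
  have hMulW : ((D.mat * W) a b).coeff (-(Dg : ℤ))
      = (W a b * polyZinv (D.q (D.blk a))).coeff (-(Dg : ℤ)) := by
    rw [Matrix.mul_apply, coeff_sum]
    rw [Finset.sum_eq_single a]
    · rw [hmat, Matrix.of_apply, if_pos rfl, add_mul, HahnSeries.coeff_add]
      have hz : (HahnSeries.single (-1 : ℤ) (r a a) * W a b).coeff (-(Dg : ℤ)) = 0 := by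
        have h := HahnSeries.coeff_single_mul_add (x := W a b) (r := r a a)
          (a := -(Dg : ℤ) + 1) (b := (-1 : ℤ))
        rw [show -(Dg : ℤ) + 1 + -1 = -(Dg : ℤ) by ring] at h
        rw [h, hW a b _ ht01, mul_zero]
      rw [hz, add_zero, mul_comm]
    · intro c _ hca
      rw [hmat, Matrix.of_apply, if_neg (fun hc => hca hc.symm), zero_add]
      have h := HahnSeries.coeff_single_mul_add (x := W c b) (r := r a c)
        (a := -(Dg : ℤ) + 1) (b := (-1 : ℤ))
      rw [show -(Dg : ℤ) + 1 + -1 = -(Dg : ℤ) by ring] at h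
      rw [h, hW c b _ ht01, mul_zero]
    · intro ha; exact absurd (Finset.mem_univ a) ha
  have hzero := hC a b (-(Dg : ℤ)) ht0
  rw [Matrix.sub_apply, HahnSeries.coeff_sub, hWmul, hMulW] at hzero
  rw [mul_polyZinv_coeff, mul_polyZinv_coeff] at hzero
  set s : Finset ℕ := (D.q (D.blk b)).support ∪ (D.q (D.blk a)).support with hs
  have e1 : ∑ d ∈ (D.q (D.blk b)).support, (W a b).coeff (-(Dg : ℤ) + d) * (D.q (D.blk b)).coeff d
      = ∑ d ∈ s, (W a b).coeff (-(Dg : ℤ) + d) * (D.q (D.blk b)).coeff d :=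
    Finset.sum_subset Finset.subset_union_left (fun x _ hx => by
      rw [Polynomial.notMem_support_iff.mp hx, mul_zero])
  have e2 : ∑ d ∈ (D.q (D.blk a)).support, (W a b).coeff (-(Dg : ℤ) + d) * (D.q (D.blk a)).coeff d
      = ∑ d ∈ s, (W a b).coeff (-(Dg : ℤ) + d) * (D.q (D.blk a)).coeff d :=
    Finset.sum_subset Finset.subset_union_right (fun x _ hx => by
      rw [Polynomial.notMem_support_iff.mp hx, mul_zero])
  rw [e1, e2, ← Finset.sum_sub_distrib] at hzero
  have e3 : ∀ d ∈ s, (W a b).coeff (-(Dg : ℤ) + d) * (D.q (D.blk b)).coeff d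
      - (W a b).coeff (-(Dg : ℤ) + d) * (D.q (D.blk a)).coeff d
      = (W a b).coeff (-(Dg : ℤ) + d) * p.coeff d := by
    intro d _
    rw [hp, Polynomial.coeff_sub]
    ring
  rw [Finset.sum_congr rfl e3] at hzero
  have hDgmem : Dg ∈ s := by
    rw [hs, Finset.mem_union, Polynomial.mem_support_iff, Polynomial.mem_support_iff]
    by_contra hcon
    push_neg at hcon
    apply hl
    rw [hp, Polynomial.coeff_sub, hcon.1, hcon.2, sub_zero]
  have e4 : ∑ d ∈ s, (W a b).coeff (-(Dg : ℤ) + d) * p.coeff d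
      = (W a b).coeff (-(Dg : ℤ) + Dg) * p.coeff Dg :=
    Finset.sum_eq_single_of_mem Dg hDgmem (fun d _ hne => by
      by_cases hpd : p.coeff d = 0
      · rw [hpd, mul_zero]
      · have hdle : d ≤ Dg := Polynomial.le_natDegree_of_ne_zero hpd
        have hneg : -(Dg : ℤ) + d < 0 := by
          have : d ≠ Dg := hne
          omega
        rw [hW a b _ hneg, zero_mul])
  rw [e4, show -(Dg : ℤ) + Dg = 0 by ring] at hzero
  exact (mul_eq_zero.mp hzero).resolve_right hl

/-! ### The core rigidity lemma -/

lemma ring_identity {R : Type*} [Ring R] (u1 u2 c : Rˣ) (B Q1 Q2 : R)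
    (h : ↑c * Q1 * ↑c⁻¹ = Q2) :
    (↑u2⁻¹ * ↑c * ↑u1) * B - B * (↑u2⁻¹ * ↑c * ↑u1)
      = ↑u2⁻¹ * ((↑c * ((↑u1 * B * ↑u1⁻¹) - Q1) * ↑c⁻¹) - ((↑u2 * B * ↑u2⁻¹) - Q2))
        * (↑c * ↑u1) := by
  have h' : (↑c * ((↑u1 * B * ↑u1⁻¹) - Q1) * ↑c⁻¹) - ((↑u2 * B * ↑u2⁻¹) - Q2)
      = ↑c * (↑u1 * B * ↑u1⁻¹) * ↑c⁻¹ - ↑u2 * B * ↑u2⁻¹ := by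
    rw [mul_sub, sub_mul, h]
    abel
  rw [h']
  simp only [mul_sub, sub_mul, mul_assoc, Units.inv_mul_cancel_left,
    Units.mul_inv_cancel_left, Units.inv_mul, Units.mul_inv, mul_one]

/-- constant coefficient ring hom on matrices of power series -/
def ccM (n : ℕ) : Matrix (Fin n) (Fin n) (PowerSeries ℂ) →+* Matrix (Fin n) (Fin n) ℂ :=
  (PowerSeries.constantCoeff (R := ℂ)).mapMatrix

lemma ccM_apply {n : ℕ} (M : Matrix (Fin n) (Fin n) (PowerSeries ℂ)) :
    ccM n M = M.map (PowerSeries.constantCoeff (R := ℂ)) := rfl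

lemma ccM_psC {n : ℕ} (g : GLc n) : ccM n ((psC g).val) = g.val := by
  rw [ccM_apply, psC_val, Matrix.map_map]
  have : ((PowerSeries.constantCoeff (R := ℂ)) ∘ (PowerSeries.C (R := ℂ)) : ℂ → ℂ) = id := by
    funext x
    simp
  rw [this, Matrix.map_id]

lemma ccM_inv_one {n : ℕ} (X : GLps n) (hX : X.val.map (PowerSeries.constantCoeff (R := ℂ)) = 1) :
    ccM n ((X⁻¹).val) = 1 := by
  have e : (X⁻¹).val * X.val = 1 := X.inv_mul
  have := congrArg (ccM n) e
  rw [_root_.map_mul, _root_.map_one] at this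
  rw [ccM_apply X.val, hX, mul_one] at this
  exact this

lemma core {n : ℕ} (D : HTLData n) (X1 X2 : GLps n)
    (hX1 : X1.val.map (PowerSeries.constantCoeff (R := ℂ)) = 1)
    (hX2 : X2.val.map (PowerSeries.constantCoeff (R := ℂ)) = 1)
    (c : GLc n)
    (h : conjC c (prinM (conjPS X1 D.mat)) = prinM (conjPS X2 D.mat)) :
    ∀ a b, D.blk a ≠ D.blk b → c.val a b = 0 := by
  intro a b hab
  set Y : GLps n := X2⁻¹ * psC c * X1 with hY
  set W := (glMap Y).val with hWdef
  have hWhol : HolM W := holM_glMap Y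
  -- the constant coefficient of Y is c
  have hY0 : ccM n Y.val = c.val := by
    rw [hY, Units.val_mul, Units.val_mul, _root_.map_mul, _root_.map_mul, ccM_psC,
      ccM_inv_one X2 hX2, one_mul, ccM_apply, hX1, mul_one]
  have hW0 : (W a b).coeff 0 = c.val a b := by
    rw [hWdef, glMap_val_apply, coeff_ofPowerSeries_zero]
    calc (PowerSeries.constantCoeff (R := ℂ)) (Y.val a b) = (ccM n Y.val) a b := rfl
      _ = c.val a b := by rw [hY0]
  -- W is the value of the unit (glMap X2)⁻¹ * glC c * glMap X1
  have hWeq : W = ((glMap X2)⁻¹).val * (glC c).val * (glMap X1).val := by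
    rw [hWdef, hY, _root_.map_mul, _root_.map_mul, _root_.map_inv, glMap_psC, Units.val_mul, Units.val_mul]
  -- the commutator with D.mat is holomorphic
  have hHol : HolM (W * D.mat - D.mat * W) := by
    have hid := ring_identity (glMap X1) (glMap X2) (glC c) D.mat
      (prinM (conjPS X1 D.mat)) (prinM (conjPS X2 D.mat)) h
    rw [hWeq, hid]
    refine HolM.mul (HolM.mul (holM_glMap_inv X2) ?_) (HolM.mul (holM_glC c) (holM_glMap X1))
    refine HolM.sub (HolM.mul (HolM.mul (holM_glC c) ?_) (holM_glC_inv c)) ?_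
    · exact holM_sub_prinM (conjPS X1 D.mat)
    · exact holM_sub_prinM (conjPS X2 D.mat)
  rw [← hW0]
  exact keyMain D W hWhol hHol a b hab

/-! ### The group `H` -/

lemma hgrp_one {n : ℕ} (D : HTLData n) : (1 : GLc n) ∈ D.Hgrp := by
  intro a b hab
  have hne : a ≠ b := fun h => hab (by rw [h])
  rw [Units.val_one, Matrix.one_apply_ne hne]

lemma hgrp_mul {n : ℕ} (D : HTLData n) {h1 h2 : GLc n}
    (hh1 : h1 ∈ D.Hgrp) (hh2 : h2 ∈ D.Hgrp) : h1 * h2 ∈ D.Hgrp := by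
  intro a b hab
  rw [Units.val_mul, Matrix.mul_apply]
  apply Finset.sum_eq_zero
  intro c _
  by_cases hc : D.blk a = D.blk c
  · rw [hh2 c b (fun h => hab (hc.trans h)), mul_zero]
  · rw [hh1 a c hc, zero_mul]

lemma hgrp_inv {n : ℕ} (D : HTLData n) {h : GLc n} (hh : h ∈ D.Hgrp) : h⁻¹ ∈ D.Hgrp := by
  classical
  set δ : Fin D.m → Fin n → ℂ := fun j a => if D.blk a = j then 1 else 0 with hδ
  have comm : ∀ j, h.val * Matrix.diagonal (δ j) = Matrix.diagonal (δ j) * h.val := by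
    intro j
    apply Matrix.ext
    intro a b
    rw [Matrix.mul_diagonal, Matrix.diagonal_mul]
    by_cases hab : D.blk a = D.blk b
    · rw [hδ]
      simp only [hab]
      ring
    · rw [hh a b hab, zero_mul, mul_zero]
  have comm' : ∀ j, (h⁻¹).val * Matrix.diagonal (δ j) = Matrix.diagonal (δ j) * (h⁻¹).val := by
    intro j
    have e1 : h.val * (h⁻¹).val = 1 := h.mul_inv
    have e2 : (h⁻¹).val * h.val = 1 := h.inv_mul
    calc (h⁻¹).val * Matrix.diagonal (δ j)
        = (h⁻¹).val * Matrix.diagonal (δ j) * (h.val * (h⁻¹).val) := by rw [e1, mul_one]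
      _ = (h⁻¹).val * (Matrix.diagonal (δ j) * h.val) * (h⁻¹).val := by
          simp only [mul_assoc]
      _ = (h⁻¹).val * (h.val * Matrix.diagonal (δ j)) * (h⁻¹).val := by rw [← comm j]
      _ = ((h⁻¹).val * h.val) * Matrix.diagonal (δ j) * (h⁻¹).val := by
          simp only [mul_assoc]
      _ = Matrix.diagonal (δ j) * (h⁻¹).val := by rw [e2, one_mul]
  intro a b hab
  have := Matrix.ext_iff.mpr (comm' (D.blk a)) a b
  rw [Matrix.mul_diagonal, Matrix.diagonal_mul] at this
  have hba : ¬ D.blk b = D.blk a := fun hc => hab hc.symm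
  simp only [hδ, hba, if_true, if_false, eq_self_iff_true, mul_zero, one_mul] at this
  exact this.symm

/-- Conjugating a truncated conjugate of `B` by a constant matrix stays in the orbit. -/
lemma conjC_prin_conjPS {n : ℕ} (D : HTLData n) (g : GLc n) (X : GLps n) :
    conjC g (prinM (conjPS X D.mat)) = prinM (conjPS (psC g * X) D.mat) := by
  rw [conjC_prinM, ← conjPS_psC, ← conjPS_mul]

end OrbitAux

end Aux

theorem truncated_orbit_decomposition' (n : ℕ) (D : HTLData n) :
    (∀ (g : GLc n), ∀ M ∈ D.AdH, conjC g M ∈ D.Otru)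
    ∧ (∀ M' ∈ D.Otru, ∃ g : GLc n, ∃ M ∈ D.AdH, M' = conjC g M)
    ∧ (∀ (g g' : GLc n), ∀ M ∈ D.AdH, ∀ M' ∈ D.AdH,
        (conjC g M = conjC g' M' ↔ ∃ h ∈ D.Hgrp, g' = g * h⁻¹ ∧ M' = conjC h M)) := by
  open OrbitAux in
  refine ⟨?_, ?_, ?_⟩
  · -- (i)
    rintro g M ⟨h, hh, M0, ⟨X, hX, rfl⟩, rfl⟩
    refine ⟨psC (g * h) * X, ?_⟩
    rw [conjC_mul, conjC_prin_conjPS]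
  · -- (ii)
    rintro M' ⟨X, rfl⟩
    set g : GLc n := Units.map (ccM n).toMonoidHom X with hg
    set Y : GLps n := (psC g)⁻¹ * X with hYdef
    have hYc : Y.val.map (PowerSeries.constantCoeff (R := ℂ)) = 1 := by
      have : Y.val.map (PowerSeries.constantCoeff (R := ℂ)) = ccM n Y.val := rfl
      rw [this, hYdef, Units.val_mul, _root_.map_mul]
      have h1 : ccM n (((psC g)⁻¹).val) = (g⁻¹).val := by
        rw [← _root_.map_inv psC]
        exact ccM_psC g⁻¹
      have h2 : ccM n X.val = g.val := rfl
      rw [h1, h2, ← Units.val_mul, inv_mul_cancel, Units.val_one]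
    refine ⟨g, prinM (conjPS Y D.mat),
      ⟨1, hgrp_one D, prinM (conjPS Y D.mat), ⟨Y, hYc, rfl⟩, (conjC_one _).symm⟩, ?_⟩
    have hXY : psC g * Y = X := by rw [hYdef, mul_inv_cancel_left]
    rw [conjC_prin_conjPS, hXY]
  · -- (iii)
    intro g g' M hM M' hM'
    constructor
    · intro heq
      obtain ⟨h1, hh1, A1, ⟨X1, hX1, rfl⟩, rfl⟩ := hM
      obtain ⟨h2, hh2, A2, ⟨X2, hX2, rfl⟩, rfl⟩ := hM'
      have key : conjC (h2⁻¹ * g'⁻¹ * g * h1) (prinM (conjPS X1 D.mat))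
          = prinM (conjPS X2 D.mat) := by
        have h3 := congrArg (conjC (h2⁻¹ * g'⁻¹)) heq
        rw [conjC_mul, conjC_mul, conjC_mul, conjC_mul] at h3
        rw [show h2⁻¹ * g'⁻¹ * g' * h2 = 1 by group, conjC_one] at h3
        exact h3
      have hc : (h2⁻¹ * g'⁻¹ * g * h1) ∈ D.Hgrp :=
        fun a b hab => core D X1 X2 hX1 hX2 _ key a b hab
      refine ⟨g'⁻¹ * g, ?_, by group, ?_⟩
      · have e : g'⁻¹ * g = h2 * (h2⁻¹ * g'⁻¹ * g * h1) * h1⁻¹ := by group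
        rw [e]
        exact hgrp_mul D (hgrp_mul D hh2 hc) (hgrp_inv D hh1)
      · have h4 := congrArg (conjC g'⁻¹) heq
        rw [conjC_mul, conjC_mul, conjC_mul, conjC_mul] at h4
        rw [show g'⁻¹ * g' * h2 = h2 by group] at h4
        rw [conjC_mul]
        exact h4.symm
    · rintro ⟨h, hh, rfl, rfl⟩
      rw [conjC_mul, inv_mul_cancel_right]

theorem main_proof (n : ℕ) (D : HTLData n) :
    (∀ (g : GLc n), ∀ M ∈ D.AdH, conjC g M ∈ D.Otru)
    ∧ (∀ M' ∈ D.Otru, ∃ g : GLc n, ∃ M ∈ D.AdH, M' = conjC g M)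
    ∧ (∀ (g g' : GLc n), ∀ M ∈ D.AdH, ∀ M' ∈ D.AdH,
        (conjC g M = conjC g' M' ↔ ∃ h ∈ D.Hgrp, g' = g * h⁻¹ ∧ M' = conjC h M)) :=
  truncated_orbit_decomposition' n D
/-- STATEMENT 6: `(g, A) ↦ gAg⁻¹` induces a well-defined bijection
`GL(n,ℂ) ×_H Ad_H((O^tru_B)^o) → O^tru_B`:
(i) the map lands in `O^tru_B`; (ii) it is onto `O^tru_B`; (iii) two pairs have the
same image iff they are related by the `H`-twist `(g,A) ∼ (gh⁻¹, hAh⁻¹)`. -/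
theorem truncated_orbit_decomposition (n : ℕ) (D : HTLData n) :
    (∀ (g : GLc n), ∀ M ∈ D.AdH, conjC g M ∈ D.Otru)
    ∧ (∀ M' ∈ D.Otru, ∃ g : GLc n, ∃ M ∈ D.AdH, M' = conjC g M)
    ∧ (∀ (g g' : GLc n), ∀ M ∈ D.AdH, ∀ M' ∈ D.AdH,
        (conjC g M = conjC g' M' ↔ ∃ h ∈ D.Hgrp, g' = g * h⁻¹ ∧ M' = conjC h M)) := by
  exact main_proof n D
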